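/- Let A^α be the Levi type subalgebra of the cellular algebra A. For λ ∈ Λ⁺, the restriction of the standard A-module W^λ to A^α decomposes as W^λ ≅ Z^{(λ,0)} ⊕ Z^{(λ,1)} (standard A^α-modules, with the convention Z^{(λ,ε)} = 0 when (λ,ε) ∉ Ω), via c^λ_t ↦ c^{(λ,ε)}_t for t ∈ I(λ,ε); moreover L^λ ≅ L^{(λ,0)} ⊕ L^{(λ,1)} as A^α-modules. -/

import Mathlib

open MulOpposite

noncomputable section

universe u

section CompFactors

variable (A : Type u) [Ring A]

/-- The `i`-th factor of a series of submodules. -/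
abbrev CompSeriesFactor {M : Type u} [AddCommGroup M] [Module A M]
    (s : CompositionSeries (Submodule A M)) (i : Fin s.length) : Type u :=
  ↥(s i.succ) ⧸ Submodule.comap (s i.succ).subtype (s i.castSucc)

open Classical in
/-- The multiplicity of `N` among the composition factors of `M` (returning `0` if `M`
has no composition series); by the Jordan–Hölder theorem this does not depend on the
choice of composition series. -/
def compMult (M : Type u) [AddCommGroup M] [Module A M]
    (N : Type u) [AddCommGroup N] [Module A N] : ℕ :=
  if h : ∃ s : CompositionSeries (Submodule A M), s.head = ⊥ ∧ s.last = ⊤ then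
    (Finset.univ.filter fun i : Fin h.choose.length =>
      Nonempty (CompSeriesFactor A h.choose i ≃ₗ[A] N)).card
  else 0

/-- `N` is (isomorphic to) a composition factor, i.e. a simple subquotient, of `M`. -/
def IsCompFactor (M N : Type u) [AddCommGroup M] [Module A M]
    [AddCommGroup N] [Module A N] : Prop :=
  ∃ p q : Submodule A M, p ≤ q ∧
    IsSimpleModule A (↥q ⧸ Submodule.comap q.subtype p) ∧
    Nonempty ((↥q ⧸ Submodule.comap q.subtype p) ≃ₗ[A] N)

/-- `M₁` and `M₂` have a common composition factor. -/
def ShareFactor (M₁ M₂ : Type u) [AddCommGroup M₁] [Module A M₁]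
    [AddCommGroup M₂] [Module A M₂] : Prop :=
  ∃ (p q : Submodule A M₁) (p' q' : Submodule A M₂), p ≤ q ∧ p' ≤ q' ∧
    IsSimpleModule A (↥q ⧸ Submodule.comap q.subtype p) ∧
    Nonempty ((↥q ⧸ Submodule.comap q.subtype p) ≃ₗ[A]
      (↥q' ⧸ Submodule.comap q'.subtype p'))

/-- `e` is a primitive central idempotent (a block idempotent) of `A`. -/
def IsPrimCentralIdem (e : A) : Prop :=
  IsIdempotentElem e ∧ e ∈ Set.center A ∧ e ≠ 0 ∧
    ∀ f g : A, IsIdempotentElem f → IsIdempotentElem g → f ∈ Set.center A →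
      g ∈ Set.center A → f * g = 0 → e = f + g → f = 0 ∨ g = 0

/-- A module belongs to the block of the central idempotent `e` when `e` acts as
the identity on it. -/
def InBlock (e : A) (M : Type u) [AddCommGroup M] [Module A M] : Prop :=
  ∀ m : M, e • m = m

/-- `P` is a projective cover of `L`. -/
def IsProjCover (P L : Type u) [AddCommGroup P] [Module A P]
    [AddCommGroup L] [Module A L] : Prop :=
  Module.Projective A P ∧ ∃ f : P →ₗ[A] L, Function.Surjective f ∧
    ∀ N : Submodule A P, N ⊔ LinearMap.ker f = ⊤ → N = ⊤

end CompFactors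

/-- The bilinear form on `ι → R` induced by a matrix `φ`. -/
def formSum {R ι : Type u} [CommRing R] [Fintype ι] (φ : ι → ι → R) (x y : ι → R) : R :=
  ∑ s, ∑ t, x s * φ s t * y t

section Cellular

variable (R A : Type u) [CommRing R] [Ring A] [Algebra R A]
variable (Λp : Type u) [PartialOrder Λp] (T : Λp → Type u) [∀ l, Fintype (T l)]

/-- A cell datum (Graham–Lehrer) for the `R`-algebra `A`: a cellular basis
`c l s t` indexed by pairs of elements of `T l` for `l` in the poset `Λp`, an
anti-automorphism `star` swapping the two indices, and structure constants
`coeff` for right multiplication, acting on the second index modulo higher terms. -/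
structure CellDatum where
  c : ∀ l, T l → T l → A
  basis : Module.Basis ((l : Λp) × (T l × T l)) R A
  basis_eq : ∀ l s t, basis ⟨l, (s, t)⟩ = c l s t
  star : A →ₗ[R] A
  star_mul : ∀ a b, star (a * b) = star b * star a
  star_c : ∀ l s t, star (c l s t) = c l t s
  coeff : ∀ l, T l → A → T l → R
  mul_rule : ∀ (l) (s t : T l) (a : A),
    c l s t * a - ∑ v, coeff l t a v • c l s v ∈
      Submodule.span R {x : A | ∃ l' s' t', l < l' ∧ x = c l' s' t'}

variable {R A Λp T}

namespace CellDatum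

variable (D : CellDatum R A Λp T)

/-- The span of the cellular basis elements with index strictly above `l`. -/
def Aup (l : Λp) : Submodule R A :=
  Submodule.span R {x : A | ∃ l' s' t', l < l' ∧ x = D.c l' s' t'}

/-- The span of the cellular basis elements with index in `P`. -/
def cellSpan (P : Set Λp) : Submodule R A :=
  Submodule.span R {x : A | ∃ l s t, l ∈ P ∧ x = D.c l s t}

/-- The data of right standard (cell) modules: each `T l → R` is a right `A`-module
(i.e. a module over `Aᵐᵒᵖ`), the action is `R`-bilinear, and on the standard basis it is
given by the structure constants of the cell datum. -/
def RightStd [∀ l, DecidableEq (T l)] [∀ l, Module Aᵐᵒᵖ (T l → R)] : Prop :=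
  (∀ (l : Λp) (r : R) (a : Aᵐᵒᵖ) (x : T l → R), a • (r • x) = r • (a • x)) ∧
  (∀ (l : Λp) (t : T l) (a : A),
    (op a) • (Pi.single t 1 : T l → R) = fun v => D.coeff l t a v)

/-- The data of left standard (cell) modules. -/
def LeftStd [∀ l, DecidableEq (T l)] [∀ l, Module A (T l → R)] : Prop :=
  (∀ (l : Λp) (r : R) (a : A) (x : T l → R), a • (r • x) = r • (a • x)) ∧
  (∀ (l : Λp) (t : T l) (a : A),
    a • (Pi.single t 1 : T l → R) = fun v => D.coeff l t (D.star a) v)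

/-- `φ` is the matrix of the canonical bilinear form on the standard modules:
`c l u s * c l t v ≡ φ l s t • c l u v` modulo `A^{∨l}`. -/
def FormData (φ : ∀ l, T l → T l → R) : Prop :=
  ∀ (l : Λp) (s t u v : T l), D.c l u s * D.c l t v - φ l s t • D.c l u v ∈ D.Aup l

section Idem

variable {Λt M X : Type u} [PartialOrder Λt] [PartialOrder X] [Fintype M]

/-- Assumptions (A1)–(A4): `ι : Λp → Λt` realizes the cell poset inside the
bigger poset `Λt`, `κ : M → Λt` realizes the index set of the orthogonal idempotent
decomposition `1 = ∑ e μ`, each `e μ` lies in the span of the `c l s t` with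
`ι l ≥ κ μ`, and every column of the cellular basis is fixed by some `e μ`. -/
structure IdemData (ι : Λp → Λt) (κ : M → Λt) (e : M → A) : Prop where
  order_iff : ∀ l l', ι l ≤ ι l' ↔ l ≤ l'
  kappa_inj : Function.Injective κ
  ne_zero : ∀ μ, e μ ≠ 0
  idem : ∀ μ, e μ * e μ = e μ
  orth : ∀ μ ν, μ ≠ ν → e μ * e ν = 0
  sum_one : ∑ μ, e μ = 1
  mem_span : ∀ μ, e μ ∈ Submodule.span R {x : A | ∃ l s t, κ μ ≤ ι l ∧ x = D.c l s t}
  exists_idem : ∀ (l) (t : T l), ∃ μ, (∀ s, D.c l s t * e μ = D.c l s t) ∧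
    (∀ u, e μ * D.c l t u = D.c l t u)

/-- `T(λ,μ)`: the indices `t` whose column (resp. row) of the cellular basis is fixed
by right (resp. left) multiplication by `e μ`. -/
def Tset (e : M → A) (l : Λp) (μ : M) : Set (T l) :=
  {t | (∀ s, D.c l s t * e μ = D.c l s t) ∧ (∀ u, e μ * D.c l t u = D.c l t u)}

/-- `T⁺_α(λ)`. -/
def Tplus (e : M → A) (ι : Λp → Λt) (κ : M → Λt) (α : Λt → X) (l : Λp) : Set (T l) :=
  {t | ∃ μ, t ∈ D.Tset e l μ ∧ α (ι l) = α (κ μ)}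

/-- `T⁻_α(λ)`. -/
def Tminus (e : M → A) (ι : Λp → Λt) (κ : M → Λt) (α : Λt → X) (l : Λp) : Set (T l) :=
  {t | ∃ μ, t ∈ D.Tset e l μ ∧ α (κ μ) < α (ι l)}

/-- `I(λ,ε)`: `T⁺_α(λ)` for `ε = false` and `T⁻_α(λ)` for `ε = true`. -/
def Iset (e : M → A) (ι : Λp → Λt) (κ : M → Λt) (α : Λt → X) (l : Λp) : Bool → Set (T l)
  | false => D.Tplus e ι κ α l
  | true => D.Tminus e ι κ α l

/-- `J̃(λ,ε)`: `T⁺_α(λ)` for `ε = false` and all of `T(λ)` for `ε = true`. -/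
def Jset (e : M → A) (ι : Λp → Λt) (κ : M → Λt) (α : Λt → X) (l : Λp) : Bool → Set (T l)
  | false => D.Tplus e ι κ α l
  | true => Set.univ

/-- The Levi type subalgebra `A^α` (as a submodule). -/
def levi (e : M → A) (ι : Λp → Λt) (κ : M → Λt) (α : Λt → X) : Submodule R A :=
  Submodule.span R {x : A | ∃ l ε s t, s ∈ D.Iset e ι κ α l ε ∧ t ∈ D.Iset e ι κ α l ε ∧
    x = D.c l s t}

/-- The parabolic type subalgebra `Ã^α` (as a submodule). -/
def parab (e : M → A) (ι : Λp → Λt) (κ : M → Λt) (α : Λt → X) : Submodule R A :=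
  Submodule.span R {x : A | ∃ l ε s t, s ∈ D.Iset e ι κ α l ε ∧ t ∈ D.Jset e ι κ α l ε ∧
    x = D.c l s t}

/-- The span of the elements of the cellular basis of `A^α` of index strictly
above `(l,ε)` in `Ω`. -/
def upperOm (e : M → A) (ι : Λp → Λt) (κ : M → Λt) (α : Λt → X) (p : Λp × Bool) :
    Submodule R A :=
  Submodule.span R {x : A | ∃ (q : Λp × Bool) (s t : T q.1),
    ((p.2 < q.2) ∨ (p.2 = q.2 ∧ p.1 < q.1)) ∧
    s ∈ D.Iset e ι κ α q.1 q.2 ∧ t ∈ D.Iset e ι κ α q.1 q.2 ∧ x = D.c q.1 s t}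

/-- The span of the elements of the standard basis of `Ã^α` of index strictly
above `(l,ε)` in `Ω`. -/
def upperOmParab (e : M → A) (ι : Λp → Λt) (κ : M → Λt) (α : Λt → X) (p : Λp × Bool) :
    Submodule R A :=
  Submodule.span R {x : A | ∃ (q : Λp × Bool) (s t : T q.1),
    ((p.2 < q.2) ∨ (p.2 = q.2 ∧ p.1 < q.1)) ∧
    s ∈ D.Iset e ι κ α q.1 q.2 ∧ t ∈ D.Jset e ι κ α q.1 q.2 ∧ x = D.c q.1 s t}

end Idem

end CellDatum

end Cellular

set_option linter.unusedSectionVars false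
set_option linter.unnecessarySimpa false
section Aux

open CellDatum

variable {R A : Type u} [CommRing R] [Ring A] [Algebra R A]
variable {Λp : Type u} [PartialOrder Λp]
variable {T : Λp → Type u} [∀ l, Fintype (T l)]
variable (D : CellDatum R A Λp T)

theorem coeff_unique (P : Set Λp) {l : Λp} (hl : l ∉ P) (s : T l) (r : T l → R)
    (h : (∑ v, r v • D.c l s v) ∈ D.cellSpan P) : ∀ v, r v = 0 := by
  have hset : {x : A | ∃ l' s' t', l' ∈ P ∧ x = D.c l' s' t'} =
      D.basis '' {i : (l' : Λp) × (T l' × T l') | i.1 ∈ P} := by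
    ext x
    constructor
    · rintro ⟨l', s', t', hP, rfl⟩
      exact ⟨⟨l', (s', t')⟩, hP, D.basis_eq _ _ _⟩
    · rintro ⟨⟨l', s', t'⟩, hP, rfl⟩
      exact ⟨l', s', t', hP, D.basis_eq _ _ _⟩
  rw [CellDatum.cellSpan, hset, Module.Basis.mem_span_image] at h
  intro v
  have hr : D.basis.repr (∑ w, r w • D.c l s w) ⟨l, (s, v)⟩ = r v := by
    simp_rw [← D.basis_eq, map_sum, map_smul, Module.Basis.repr_self]
    rw [Finsupp.coe_finset_sum, Finset.sum_apply]
    rw [Finset.sum_eq_single v]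
    · simp
    · intro w _ hw
      have : (⟨l, (s, w)⟩ : (l' : Λp) × (T l' × T l')) ≠ ⟨l, (s, v)⟩ := by
        simp [hw]
      simp [Finsupp.single_apply_eq_zero, this]
    · simp
  by_contra hne
  have hmem : (⟨l, (s, v)⟩ : (l' : Λp) × (T l' × T l')) ∈
      (D.basis.repr (∑ w, r w • D.c l s w)).support := by
    rw [Finsupp.mem_support_iff, hr]; exact hne
  exact hl (h hmem)

theorem single_smul_zero (P : Set Λp) {l : Λp} (hl : l ∉ P) (s v : T l) (r : R)
    (h : r • D.c l s v ∈ D.cellSpan P) : r = 0 := by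
  classical
  have h2 : (∑ w, (if w = v then r else 0) • D.c l s w) ∈ D.cellSpan P := by
    rw [Finset.sum_eq_single v]
    · simpa using h
    · intro w _ hw; simp [hw]
    · simp
  simpa using coeff_unique D P hl s _ h2 v

theorem Aup_eq_cellSpan (l : Λp) : D.Aup l = D.cellSpan {l' | l < l'} := rfl

theorem Aup_le_cellSpan {P : Set Λp} {l : Λp} (h : ∀ l', l < l' → l' ∈ P) :
    D.Aup l ≤ D.cellSpan P := by
  apply Submodule.span_le.2
  rintro x ⟨l', s', t', hlt, rfl⟩
  exact Submodule.subset_span ⟨l', s', t', h l' hlt, rfl⟩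

theorem c_mem_cellSpan {P : Set Λp} {l : Λp} (hl : l ∈ P) (s t : T l) :
    D.c l s t ∈ D.cellSpan P :=
  Submodule.subset_span ⟨l, s, t, hl, rfl⟩

theorem cellSpan_mul_mem {P : Set Λp} (hP : ∀ ⦃l₁ l₂⦄, l₁ ∈ P → l₁ < l₂ → l₂ ∈ P)
    (a : A) {x : A} (hx : x ∈ D.cellSpan P) : x * a ∈ D.cellSpan P := by
  induction hx using Submodule.span_induction with
  | mem x hx =>
    obtain ⟨l, s, t, hl, rfl⟩ := hx
    have h1 := D.mul_rule l s t a
    have h2 : D.c l s t * a =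
        (D.c l s t * a - ∑ v, D.coeff l t a v • D.c l s v) +
          ∑ v, D.coeff l t a v • D.c l s v := by abel
    rw [h2]
    refine Submodule.add_mem _ (Aup_le_cellSpan D (fun l' h' => hP hl h') h1) ?_
    exact Submodule.sum_mem _ fun v _ => Submodule.smul_mem _ _ (c_mem_cellSpan D hl s v)
  | zero => simpa using Submodule.zero_mem _
  | add y z _ _ hy hz => rw [add_mul]; exact Submodule.add_mem _ hy hz
  | smul r y _ hy => rw [smul_mul_assoc]; exact Submodule.smul_mem _ _ hy

theorem cd_star_star (x : A) : D.star (D.star x) = x := by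
  have h : (D.star ∘ₗ D.star) = LinearMap.id := by
    apply D.basis.ext
    rintro ⟨l, s, t⟩
    rw [D.basis_eq]
    simp [D.star_c]
  exact LinearMap.congr_fun h x

theorem star_mem_cellSpan {P : Set Λp} {x : A} (hx : x ∈ D.cellSpan P) :
    D.star x ∈ D.cellSpan P := by
  induction hx using Submodule.span_induction with
  | mem x hx =>
    obtain ⟨l, s, t, hl, rfl⟩ := hx
    rw [D.star_c]
    exact c_mem_cellSpan D hl t s
  | zero => simpa using Submodule.zero_mem _
  | add y z _ _ hy hz => rw [map_add]; exact Submodule.add_mem _ hy hz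
  | smul r y _ hy => rw [map_smul]; exact Submodule.smul_mem _ _ hy

theorem mul_cellSpan_mem {P : Set Λp} (hP : ∀ ⦃l₁ l₂⦄, l₁ ∈ P → l₁ < l₂ → l₂ ∈ P)
    (a : A) {x : A} (hx : x ∈ D.cellSpan P) : a * x ∈ D.cellSpan P := by
  have h1 : D.star (D.star x * D.star a) ∈ D.cellSpan P :=
    star_mem_cellSpan D (cellSpan_mul_mem D hP _ (star_mem_cellSpan D hx))
  rwa [D.star_mul, cd_star_star D, cd_star_star D] at h1

end Aux

set_option linter.unusedSectionVars false
section Aux2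

open CellDatum

variable {R A : Type u} [CommRing R] [Ring A] [Algebra R A]
variable {Λp : Type u} [PartialOrder Λp]
variable {T : Λp → Type u} [∀ l, Fintype (T l)]
variable (D : CellDatum R A Λp T)
variable {Λt M X : Type u} [PartialOrder Λt] [PartialOrder X] [Fintype M]
variable {ι : Λp → Λt} {κ : M → Λt} {e : M → A}
variable {α : Λt → X}

theorem c_ne_zero [Nontrivial R] (l : Λp) (s t : T l) : D.c l s t ≠ 0 := by
  rw [← D.basis_eq]; exact D.basis.ne_zero _

theorem Tset_unique [Nontrivial R] (hA : D.IdemData ι κ e) {l : Λp} {t : T l} {μ ν : M}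
    (hμ : t ∈ D.Tset e l μ) (hν : t ∈ D.Tset e l ν) : μ = ν := by
  by_contra hne
  have h1 : D.c l t t = 0 := by
    calc D.c l t t = e μ * (e ν * D.c l t t) := by rw [hν.2 t, hμ.2 t]
    _ = (e μ * e ν) * D.c l t t := by rw [mul_assoc]
    _ = 0 := by rw [hA.orth μ ν hne, zero_mul]
  exact c_ne_zero D l t t h1

theorem kappa_le [Nontrivial R] (hA : D.IdemData ι κ e) {l : Λp} {t : T l} {μ : M} (hμ : t ∈ D.Tset e l μ) :
    κ μ ≤ ι l := by
  have hup : ∀ ⦃l₁ l₂ : Λp⦄, l₁ ∈ {l' | κ μ ≤ ι l'} → l₁ < l₂ → l₂ ∈ {l' | κ μ ≤ ι l'} :=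
    fun l₁ l₂ h1 h2 => le_trans h1 ((hA.order_iff l₁ l₂).2 h2.le)
  have h1 : e μ ∈ D.cellSpan {l' | κ μ ≤ ι l'} := hA.mem_span μ
  have h2 : D.c l t t ∈ D.cellSpan {l' | κ μ ≤ ι l'} := by
    rw [← hμ.2 t]
    exact cellSpan_mul_mem D hup _ h1
  by_contra hn
  exact one_ne_zero (single_smul_zero D _ hn t t (1 : R) (by simpa using h2))

theorem mem_Iset_elim {l : Λp} {ε : Bool} {t : T l} (h : t ∈ D.Iset e ι κ α l ε) :
    ∃ μ, t ∈ D.Tset e l μ ∧ (ε = false → α (ι l) = α (κ μ)) ∧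
      (ε = true → α (κ μ) < α (ι l)) := by
  cases ε
  · obtain ⟨μ, h1, h2⟩ := h
    exact ⟨μ, h1, fun _ => h2, fun h => by simp at h⟩
  · obtain ⟨μ, h1, h2⟩ := h
    exact ⟨μ, h1, fun h => by simp at h, fun _ => h2⟩

theorem mem_Iset_cover [Nontrivial R] (hA : D.IdemData ι κ e) (hα : Monotone α) (l : Λp) (t : T l) :
    t ∈ D.Iset e ι κ α l false ∨ t ∈ D.Iset e ι κ α l true := by
  obtain ⟨μ, h1, h2⟩ := hA.exists_idem l t
  have ht : t ∈ D.Tset e l μ := ⟨h1, h2⟩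
  have hle : α (κ μ) ≤ α (ι l) := hα (kappa_le D hA ht)
  rcases lt_or_eq_of_le hle with h | h
  · exact Or.inr ⟨μ, ht, h⟩
  · exact Or.inl ⟨μ, ht, h.symm⟩

theorem Iset_disj [Nontrivial R] (hA : D.IdemData ι κ e) {l : Λp} {t : T l}
    (h1 : t ∈ D.Iset e ι κ α l false) (h2 : t ∈ D.Iset e ι κ α l true) : False := by
  obtain ⟨μ, hμ, hα1⟩ := h1
  obtain ⟨ν, hν, hα2⟩ := h2
  rw [Tset_unique D hA hμ hν] at hα1
  exact absurd hα1.symm (ne_of_lt hα2)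

theorem coeff_congr {l : Λp} (s t : T l) (a : A) (r : T l → R)
    (h : D.c l s t * a - ∑ v, r v • D.c l s v ∈ D.Aup l) :
    ∀ v, D.coeff l t a v = r v := by
  have h2 := D.mul_rule l s t a
  have h4 := Submodule.sub_mem _ h2 h
  have h5 : (D.c l s t * a - ∑ v, D.coeff l t a v • D.c l s v) -
      (D.c l s t * a - ∑ v, r v • D.c l s v)
      = ∑ v, (r v - D.coeff l t a v) • D.c l s v := by
    simp_rw [sub_smul]
    rw [Finset.sum_sub_distrib]
    abel
  rw [h5] at h4
  intro v
  exact (sub_eq_zero.1 (coeff_unique D _ (lt_irrefl l) s _ h4 v)).symm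

theorem coeff_zero' (l : Λp) (t v : T l) : D.coeff l t 0 v = 0 :=
  coeff_congr D t t 0 (fun _ => 0) (by simp) v

theorem coeff_add' (l : Λp) (t v : T l) (a b : A) :
    D.coeff l t (a + b) v = D.coeff l t a v + D.coeff l t b v := by
  refine coeff_congr D t t (a + b)
    (fun v => D.coeff l t a v + D.coeff l t b v) ?_ v
  have h3 := Submodule.add_mem _ (D.mul_rule l t t a) (D.mul_rule l t t b)
  have h4 : (D.c l t t * a - ∑ w, D.coeff l t a w • D.c l t w) +
      (D.c l t t * b - ∑ w, D.coeff l t b w • D.c l t w) =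
      D.c l t t * (a + b) - ∑ w, (D.coeff l t a w + D.coeff l t b w) • D.c l t w := by
    simp only [mul_add, add_smul, Finset.sum_add_distrib]
    abel
  rwa [h4] at h3

theorem coeff_smul' (l : Λp) (t v : T l) (r₀ : R) (a : A) :
    D.coeff l t (r₀ • a) v = r₀ * D.coeff l t a v := by
  refine coeff_congr D t t (r₀ • a) (fun v => r₀ * D.coeff l t a v) ?_ v
  have h1 := Submodule.smul_mem _ r₀ (D.mul_rule l t t a)
  have h4 : r₀ • (D.c l t t * a - ∑ w, D.coeff l t a w • D.c l t w) =
      D.c l t t * (r₀ • a) - ∑ w, (r₀ * D.coeff l t a w) • D.c l t w := by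
    rw [smul_sub, mul_smul_comm, Finset.smul_sum]
    simp_rw [smul_smul]
  rwa [h4] at h1

theorem coeff_zero_of_left {l : Λp} {t : T l} {μ : M}
    (hμ : t ∈ D.Tset e l μ) {a : A} (ha : e μ * a = 0) (v : T l) :
    D.coeff l t a v = 0 := by
  refine coeff_congr D t t a (fun _ => 0) ?_ v
  have h1 : D.c l t t * a = 0 := by
    rw [← hμ.1 t, mul_assoc, ha, mul_zero]
  simp [h1]

theorem coeff_zero_of_right (hA : D.IdemData ι κ e) {l : Λp} (t : T l) {v : T l} {ν : M}
    (hν : v ∈ D.Tset e l ν) {a : A} (ha : a * e ν = 0) :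
    D.coeff l t a v = 0 := by
  classical
  have hup : ∀ ⦃l₁ l₂ : Λp⦄, l₁ ∈ {l' | l < l'} → l₁ < l₂ → l₂ ∈ {l' | l < l'} :=
    fun l₁ l₂ h1 h2 => lt_trans h1 h2
  have h1 := D.mul_rule l t t a
  have h2 := cellSpan_mul_mem D hup (e ν) h1
  have h3 : (D.c l t t * a - ∑ w, D.coeff l t a w • D.c l t w) * e ν =
      - ∑ w, (if w ∈ D.Tset e l ν then D.coeff l t a w else 0) • D.c l t w := by
    rw [sub_mul, mul_assoc, ha, mul_zero, zero_sub, Finset.sum_mul, neg_inj]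
    refine Finset.sum_congr rfl fun w _ => ?_
    rw [smul_mul_assoc]
    by_cases hw : w ∈ D.Tset e l ν
    · rw [if_pos hw, hw.1 t]
    · rw [if_neg hw, zero_smul]
      obtain ⟨μw, hw1, hw2⟩ := hA.exists_idem l w
      have hne : μw ≠ ν := fun h => hw (h ▸ (⟨hw1, hw2⟩ : w ∈ D.Tset e l μw))
      rw [← hw1 t, mul_assoc, hA.orth μw ν hne, mul_zero, smul_zero]
  rw [h3] at h2
  have h4 := Submodule.neg_mem _ h2
  rw [neg_neg] at h4
  have h5 := coeff_unique D _ (lt_irrefl l) t _ h4 v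
  rwa [if_pos hν] at h5

theorem coeff_zero_of_lt (hA : D.IdemData ι κ e) (hα : Monotone α) {l l' : Λp} (hlt : α (ι l) < α (ι l'))
    (t : T l) (s' t' : T l') (v : T l) :
    D.coeff l t (D.c l' s' t') v = 0 := by
  set P : Set Λp := {l'' | l < l'' ∨ α (ι l) < α (ι l'')} with hP
  have hup : ∀ ⦃l₁ l₂ : Λp⦄, l₁ ∈ P → l₁ < l₂ → l₂ ∈ P := by
    rintro l₁ l₂ (h | h) h2
    · exact Or.inl (lt_trans h h2)
    · exact Or.inr (lt_of_lt_of_le h (hα ((hA.order_iff _ _).2 h2.le)))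
  have hl : l ∉ P := by
    rintro (h | h)
    exacts [lt_irrefl _ h, lt_irrefl _ h]
  have hgen : D.c l' s' t' ∈ D.cellSpan P := c_mem_cellSpan D (Or.inr hlt) s' t'
  have hprod : D.c l t t * D.c l' s' t' ∈ D.cellSpan P := mul_cellSpan_mem D hup _ hgen
  have h1 := D.mul_rule l t t (D.c l' s' t')
  have h2 : (∑ w, D.coeff l t (D.c l' s' t') w • D.c l t w) ∈ D.cellSpan P := by
    have h3 := Submodule.sub_mem _ hprod (Aup_le_cellSpan D (fun l'' h => Or.inl h) h1)
    simpa using h3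
  exact coeff_unique D P hl t _ h2 v

theorem phi_zero [Nontrivial R] (hA : D.IdemData ι κ e) {φ : ∀ l, T l → T l → R} (hφ : D.FormData φ)
    {l : Λp} {s t : T l} {μ ν : M} (hμ : s ∈ D.Tset e l μ) (hν : t ∈ D.Tset e l ν)
    (hne : μ ≠ ν) : φ l s t = 0 := by
  have h0 : D.c l s s * D.c l t t = 0 := by
    rw [← hμ.1 s, ← hν.2 t, mul_assoc, ← mul_assoc (e μ), hA.orth μ ν hne, zero_mul,
      mul_zero]
  have h1 := hφ l s t s t
  rw [h0, zero_sub] at h1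
  have h2 := Submodule.neg_mem _ h1
  rw [neg_neg, Aup_eq_cellSpan] at h2
  exact single_smul_zero D _ (lt_irrefl l) s t _ h2

theorem phi_Iset_zero [Nontrivial R] (hA : D.IdemData ι κ e) {φ : ∀ l, T l → T l → R} (hφ : D.FormData φ)
    {l : Λp} {ε ε' : Bool} (hne : ε ≠ ε') {s t : T l}
    (hs : s ∈ D.Iset e ι κ α l ε) (ht : t ∈ D.Iset e ι κ α l ε') : φ l s t = 0 := by
  obtain ⟨μ, hμ, hμf, hμT⟩ := mem_Iset_elim D hs
  obtain ⟨ν, hν, hνf, hνT⟩ := mem_Iset_elim D ht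
  refine phi_zero D hA hφ hμ hν ?_
  rintro rfl
  cases ε
  · cases ε'
    · exact hne rfl
    · exact absurd ((hμf rfl).symm) (ne_of_lt (hνT rfl))
  · cases ε'
    · exact absurd ((hνf rfl).symm) (ne_of_lt (hμT rfl))
    · exact hne rfl

theorem coeff_levi_zero [Nontrivial R] (hA : D.IdemData ι κ e) (hα : Monotone α) {l : Λp} {ε ε' : Bool} (hne : ε ≠ ε')
    {t v : T l} (ht : t ∈ D.Iset e ι κ α l ε) (hv : v ∈ D.Iset e ι κ α l ε')
    {a : A} (ha : a ∈ D.levi e ι κ α) : D.coeff l t a v = 0 := by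
  obtain ⟨μ, hμt, hμf, hμT⟩ := mem_Iset_elim D ht
  obtain ⟨ν, hνt, hνf, hνT⟩ := mem_Iset_elim D hv
  induction ha using Submodule.span_induction with
  | mem x hx =>
    obtain ⟨l', δ, s'', t'', hs'', ht'', rfl⟩ := hx
    obtain ⟨μ', hμ't, hμ'f, hμ'T⟩ := mem_Iset_elim D hs''
    obtain ⟨ν', hν't, hν'f, hν'T⟩ := mem_Iset_elim D ht''
    by_cases hmm : μ' = μ
    · subst hmm
      by_cases hnn : ν' = ν
      · subst hnn
        cases ε
        · cases ε'
          · exact absurd rfl hne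
          · cases δ
            · exact absurd ((hν'f rfl).symm.trans ((hμ'f rfl).trans (hμf rfl).symm))
                (hνT rfl).ne
            · exact coeff_zero_of_lt D hA hα ((hμf rfl).trans_lt (hμ'T rfl)) t s'' t'' v
        · cases ε'
          · cases δ
            · exact absurd ((hνf rfl).trans ((hν'f rfl).symm.trans (hμ'f rfl)))
                (hμT rfl).ne'
            · exact coeff_zero_of_lt D hA hα ((hνf rfl).trans_lt (hν'T rfl)) t s'' t'' v
          · exact absurd rfl hne
      · have h0 : D.c l' s'' t'' * e ν = 0 := by
          rw [← hν't.1 s'', mul_assoc, hA.orth ν' ν hnn, mul_zero]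
        exact coeff_zero_of_right D hA t hνt h0
    · have h0 : e μ * D.c l' s'' t'' = 0 := by
        rw [← hμ't.2 t'', ← mul_assoc, hA.orth μ μ' (fun h => hmm h.symm), zero_mul]
      exact coeff_zero_of_left D hμt h0 v
  | zero => exact coeff_zero' D l t v
  | add x y _ _ hx hy => rw [coeff_add' D l t v, hx, hy, add_zero]
  | smul r x _ hx => rw [coeff_smul' D l t v, hx, mul_zero]

end Aux2

set_option maxHeartbeats 1000000 in
set_option synthInstance.maxHeartbeats 400000 in
/-- regarding `A`-modules as `A^α`-modules by restriction, the standard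
module `W^λ` decomposes as `Z^{(λ,0)} ⊕ Z^{(λ,1)}` via `c^λ_t ↦ c^{(λ,ε)}_t` for
`t ∈ I(λ,ε)`, and `L^λ ≅ L^{(λ,0)} ⊕ L^{(λ,1)}` as `A^α`-modules. -/
theorem stmt_9
    {R A : Type u} [CommRing R] [Ring A] [Algebra R A]
    {Λp : Type u} [PartialOrder Λp] [Fintype Λp]
    {T : Λp → Type u} [∀ l, Fintype (T l)] [∀ l, DecidableEq (T l)]
    {Λt M X : Type u} [PartialOrder Λt] [PartialOrder X] [Fintype M]
    (D : CellDatum R A Λp T)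
    (ι : Λp → Λt) (κ : M → Λt) (e : M → A)
    (hA : D.IdemData ι κ e)
    (α : Λt → X) (hα : Monotone α)
    -- standard module data for `A`
    [∀ l, Module Aᵐᵒᵖ (T l → R)] (hRStd : D.RightStd)
    (φ : ∀ l, T l → T l → R) (hφ : D.FormData φ)
    (radW : ∀ l, Submodule Aᵐᵒᵖ (T l → R))
    (hradW : ∀ (l) (x : T l → R), x ∈ radW l ↔ ∀ y, formSum (φ l) x y = 0)
    -- the Levi type subalgebra `A^α` and its standard module data
    (Asub : Subalgebra R A) (hAsub : Asub.toSubmodule = D.levi e ι κ α)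
    [∀ (l : Λp) (ε : Bool), Fintype ↥(D.Iset e ι κ α l ε)]
    [∀ (l : Λp) (ε : Bool), Module (↥Asub)ᵐᵒᵖ (↥(D.Iset e ι κ α l ε) → R)]
    (hZsmul : ∀ (l : Λp) (ε : Bool) (r : R) (a : (↥Asub)ᵐᵒᵖ)
      (x : ↥(D.Iset e ι κ α l ε) → R), a • (r • x) = r • (a • x))
    (hZact : ∀ (l : Λp) (ε : Bool) (t : ↥(D.Iset e ι κ α l ε)) (a : Asub),
      (op a) • (Pi.single t 1 : ↥(D.Iset e ι κ α l ε) → R) =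
        fun v => D.coeff l t.1 a.1 v.1)
    (radZ : ∀ (l : Λp) (ε : Bool), Submodule (↥Asub)ᵐᵒᵖ (↥(D.Iset e ι κ α l ε) → R))
    (hradZ : ∀ (l : Λp) (ε : Bool) (x : ↥(D.Iset e ι κ α l ε) → R),
      x ∈ radZ l ε ↔ ∀ y,
        formSum (fun s t : ↥(D.Iset e ι κ α l ε) => φ l s.1 t.1) x y = 0) :
    ∀ l : Λp,
      letI : Module (↥Asub)ᵐᵒᵖ (T l → R) :=
        Module.compHom _ (RingHom.op Asub.val.toRingHom)
      letI : Module (↥Asub)ᵐᵒᵖ ((T l → R) ⧸ radW l) :=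
        Module.compHom _ (RingHom.op Asub.val.toRingHom)
      (∃ F : (T l → R) ≃ₗ[(↥Asub)ᵐᵒᵖ]
          ((↥(D.Iset e ι κ α l false) → R) × (↥(D.Iset e ι κ α l true) → R)),
        (∀ (t : T l) (h : t ∈ D.Iset e ι κ α l false),
          F (Pi.single t 1) = (Pi.single ⟨t, h⟩ 1, 0)) ∧
        (∀ (t : T l) (h : t ∈ D.Iset e ι κ α l true),
          F (Pi.single t 1) = (0, Pi.single ⟨t, h⟩ 1))) ∧
      Nonempty (((T l → R) ⧸ radW l) ≃ₗ[(↥Asub)ᵐᵒᵖ]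
        (((↥(D.Iset e ι κ α l false) → R) ⧸ radZ l false) ×
          ((↥(D.Iset e ι κ α l true) → R) ⧸ radZ l true))) := by
  intro l
  classical
  letI instW : Module (↥Asub)ᵐᵒᵖ (T l → R) :=
    Module.compHom _ (RingHom.op Asub.val.toRingHom)
  letI instQ : Module (↥Asub)ᵐᵒᵖ ((T l → R) ⧸ radW l) :=
    Module.compHom _ (RingHom.op Asub.val.toRingHom)
  rcases subsingleton_or_nontrivial R with hR | hR
  · haveI : Subsingleton (T l → R) := inferInstance
    haveI h1 : Subsingleton ((T l → R) ⧸ radW l) :=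
      ⟨fun a b => Quotient.inductionOn₂' a b fun x y => by rw [Subsingleton.elim x y]⟩
    haveI h2 : Subsingleton ((↥(D.Iset e ι κ α l false) → R) ⧸ radZ l false) :=
      ⟨fun a b => Quotient.inductionOn₂' a b fun x y => by rw [Subsingleton.elim x y]⟩
    haveI h3 : Subsingleton ((↥(D.Iset e ι κ α l true) → R) ⧸ radZ l true) :=
      ⟨fun a b => Quotient.inductionOn₂' a b fun x y => by rw [Subsingleton.elim x y]⟩
    exact ⟨⟨LinearEquiv.ofSubsingleton _ _, fun t h => Subsingleton.elim _ _,
      fun t h => Subsingleton.elim _ _⟩, ⟨LinearEquiv.ofSubsingleton _ _⟩⟩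
  · set If := D.Iset e ι κ α l false with hIf
    set It := D.Iset e ι κ α l true with hIt
    have hcov : ∀ t : T l, t ∈ If ∨ t ∈ It := mem_Iset_cover D hA hα l
    have hdis : ∀ {t : T l}, t ∈ If → t ∈ It → False := fun h1 h2 => Iset_disj D hA h1 h2
    have hlevi : ∀ a : Asub, (a : A) ∈ D.levi e ι κ α := by
      intro a
      rw [← hAsub]
      exact a.2
    -- the underlying function of the decomposition and its inverse
    let toF : (T l → R) → ((↥If → R) × (↥It → R)) :=
      fun x => (fun s => x s.1, fun s => x s.1)
    let invF : ((↥If → R) × (↥It → R)) → (T l → R) :=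
      fun y t => if h : t ∈ If then y.1 ⟨t, h⟩ else y.2 ⟨t, (hcov t).resolve_left h⟩
     
    have hleft : ∀ x, invF (toF x) = x := by
      intro x
      funext t
      by_cases h : t ∈ If
      · show (if h' : t ∈ If then (toF x).1 ⟨t, h'⟩ else (toF x).2 ⟨t, (hcov t).resolve_left h'⟩) = x t
        rw [dif_pos h]
      · show (if h' : t ∈ If then (toF x).1 ⟨t, h'⟩ else (toF x).2 ⟨t, (hcov t).resolve_left h'⟩) = x t
        rw [dif_neg h]
    have hright : ∀ y, toF (invF y) = y := by
      intro y
      refine Prod.ext ?_ ?_ <;> funext s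
      · show invF y s.1 = y.1 s
        show (if h' : s.1 ∈ If then y.1 ⟨s.1, h'⟩ else y.2 ⟨s.1, (hcov s.1).resolve_left h'⟩) = y.1 s
        rw [dif_pos s.2]
      · show invF y s.1 = y.2 s
        have h : s.1 ∉ If := fun h => hdis h s.2
        show (if h' : s.1 ∈ If then y.1 ⟨s.1, h'⟩ else y.2 ⟨s.1, (hcov s.1).resolve_left h'⟩) = y.2 s
        rw [dif_neg h]
    -- behaviour on the standard basis vectors
    have hF_single_f : ∀ (t : T l) (h : t ∈ If),
        toF (Pi.single t 1) = (Pi.single ⟨t, h⟩ 1, 0) := by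
      intro t h
      refine Prod.ext ?_ ?_
      · funext s
        show (Pi.single t 1 : T l → R) s.1 = (Pi.single ⟨t, h⟩ 1 : ↥If → R) s
        rw [Pi.single_apply, Pi.single_apply]
        simp [Subtype.ext_iff]
      · funext s
        show (Pi.single t 1 : T l → R) s.1 = 0
        have hst : s.1 ≠ t := fun hh => hdis h (hh ▸ s.2)
        rw [Pi.single_eq_of_ne hst]
    have hF_single_t : ∀ (t : T l) (h : t ∈ It),
        toF (Pi.single t 1) = (0, Pi.single ⟨t, h⟩ 1) := by
      intro t h
      refine Prod.ext ?_ ?_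
      · funext s
        show (Pi.single t 1 : T l → R) s.1 = 0
        have hst : s.1 ≠ t := fun hh => hdis s.2 (hh ▸ h)
        rw [Pi.single_eq_of_ne hst]
      · funext s
        show (Pi.single t 1 : T l → R) s.1 = (Pi.single ⟨t, h⟩ 1 : ↥It → R) s
        rw [Pi.single_apply, Pi.single_apply]
        simp [Subtype.ext_iff]
    -- compatibility of the action with scalars
    have hWcomm : ∀ (a : (↥Asub)ᵐᵒᵖ) (r : R) (x : T l → R),
        a • (r • x) = r • (a • x) := fun a r x => hRStd.1 l r _ x
    have hZcomm : ∀ (a : (↥Asub)ᵐᵒᵖ) (r : R) (y : (↥If → R) × (↥It → R)),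
        a • (r • y) = r • (a • y) := by
      intro a r y
      exact Prod.ext (hZsmul l false r a y.1) (hZsmul l true r a y.2)
    -- action on basis vectors
    have hWact : ∀ (t : T l) (a : (↥Asub)ᵐᵒᵖ),
        a • (Pi.single t 1 : T l → R) = fun v => D.coeff l t a.unop.1 v :=
      fun t a => hRStd.2 l t a.unop.1
    have hF_smul_single : ∀ (a : (↥Asub)ᵐᵒᵖ) (t : T l),
        toF (a • (Pi.single t 1 : T l → R)) = a • toF (Pi.single t 1) := by
      intro a t
      rw [hWact t a]
      rcases hcov t with h | h
      · rw [hF_single_f t h]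
        refine Prod.ext ?_ ?_
        · show (fun s : ↥If => D.coeff l t a.unop.1 s.1) =
            a • (Pi.single ⟨t, h⟩ 1 : ↥If → R)
          exact (hZact l false ⟨t, h⟩ a.unop).symm
        · show (fun s : ↥It => D.coeff l t a.unop.1 s.1) = a • (0 : ↥It → R)
          rw [smul_zero]
          funext s
          exact coeff_levi_zero D hA hα (by simp) h s.2 (hlevi a.unop)
      · rw [hF_single_t t h]
        refine Prod.ext ?_ ?_
        · show (fun s : ↥If => D.coeff l t a.unop.1 s.1) = a • (0 : ↥If → R)
          rw [smul_zero]
          funext s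
          exact coeff_levi_zero D hA hα (by simp) h s.2 (hlevi a.unop)
        · show (fun s : ↥It => D.coeff l t a.unop.1 s.1) =
            a • (Pi.single ⟨t, h⟩ 1 : ↥It → R)
          exact (hZact l true ⟨t, h⟩ a.unop).symm
    -- toF as an R-linear map, to handle sums
    let toFR : (T l → R) →ₗ[R] ((↥If → R) × (↥It → R)) :=
      { toFun := toF, map_add' := fun _ _ => rfl, map_smul' := fun _ _ => rfl }
     
    have hexpand : ∀ x : T l → R, x = ∑ t, x t • (Pi.single t 1 : T l → R) := by
      intro x
      have h1 : ∀ t : T l, x t • (Pi.single t 1 : T l → R) = Pi.single t (x t) := by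
        intro t
        rw [← Pi.single_smul, smul_eq_mul, mul_one]
      rw [Finset.sum_congr rfl fun t _ => h1 t, Finset.univ_sum_single]
    have hF_smul : ∀ (a : (↥Asub)ᵐᵒᵖ) (x : T l → R), toF (a • x) = a • toF x := by
      intro a x
      conv_lhs => rw [hexpand x]
      conv_rhs => rw [hexpand x]
      have step1 : a • (∑ t, x t • (Pi.single t 1 : T l → R)) =
          ∑ t, x t • (a • (Pi.single t 1 : T l → R)) := by
        rw [Finset.smul_sum]
        exact Finset.sum_congr rfl fun t _ => hWcomm a (x t) _
      rw [step1]
      have step2 : toF (∑ t, x t • (a • (Pi.single t 1 : T l → R))) =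
          ∑ t, x t • toF (a • (Pi.single t 1 : T l → R)) := by
        show toFR (∑ t, x t • (a • (Pi.single t 1 : T l → R))) = _
        rw [map_sum]
        exact Finset.sum_congr rfl fun t _ => toFR.map_smul _ _
      rw [step2]
      have step3 : toF (∑ t, x t • (Pi.single t 1 : T l → R)) =
          ∑ t, x t • toF (Pi.single t 1 : T l → R) := by
        show toFR (∑ t, x t • (Pi.single t 1 : T l → R)) = _
        rw [map_sum]
        exact Finset.sum_congr rfl fun t _ => toFR.map_smul _ _
      rw [step3, Finset.smul_sum]
      refine Finset.sum_congr rfl fun t _ => ?_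
      rw [hF_smul_single a t, hZcomm]
    -- the bundled equivalence
    let F : (T l → R) ≃ₗ[(↥Asub)ᵐᵒᵖ] ((↥If → R) × (↥It → R)) :=
      { toFun := toF, map_add' := fun _ _ => rfl, map_smul' := hF_smul,
        invFun := invF, left_inv := hleft, right_inv := hright }
    refine ⟨⟨F, fun t h => hF_single_f t h, fun t h => hF_single_t t h⟩, ?_⟩
    -- the decomposition of the radical
    have hbij : Function.Bijective
        (Sum.elim (Subtype.val : ↥If → T l) (Subtype.val : ↥It → T l)) := by
      constructor
      · rintro (s | s) (t | t) h
        · exact congrArg Sum.inl (Subtype.ext h)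
        · have h' : (s : T l) = (t : T l) := h
          exact (hdis s.2 (show (s : T l) ∈ It by rw [h']; exact t.2)).elim
        · have h' : (s : T l) = (t : T l) := h
          exact (hdis t.2 (show (t : T l) ∈ It by rw [← h']; exact s.2)).elim
        · exact congrArg Sum.inr (Subtype.ext h)
      · intro t
        rcases hcov t with h | h
        · exact ⟨Sum.inl ⟨t, h⟩, rfl⟩
        · exact ⟨Sum.inr ⟨t, h⟩, rfl⟩
    have hsum : ∀ g : T l → R, (∑ s : ↥If, g s.1) + (∑ s : ↥It, g s.1) = ∑ t, g t := by
      intro g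
      have h1 := hbij.sum_comp g
      rw [Fintype.sum_sum_type] at h1
      simpa using h1
    have hform_split : ∀ x y : T l → R, formSum (φ l) x y =
        formSum (fun s t : ↥If => φ l s.1 t.1) (toF x).1 (toF y).1 +
        formSum (fun s t : ↥It => φ l s.1 t.1) (toF x).2 (toF y).2 := by
      intro x y
      unfold formSum
      have hinner : ∀ s : T l, (∑ t, x s * φ l s t * y t) =
          (∑ t : ↥If, x s * φ l s t.1 * y t.1) +
          (∑ t : ↥It, x s * φ l s t.1 * y t.1) :=
        fun s => (hsum fun t => x s * φ l s t * y t).symm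
      rw [Finset.sum_congr rfl fun s _ => hinner s]
      rw [← hsum fun s => (∑ t : ↥If, x s * φ l s t.1 * y t.1) +
          (∑ t : ↥It, x s * φ l s t.1 * y t.1)]
      have hB : ∀ s : ↥If, (∑ t : ↥It, x s.1 * φ l s.1 t.1 * y t.1) = 0 := by
        intro s
        refine Finset.sum_eq_zero fun t _ => ?_
        rw [phi_Iset_zero D hA hφ (by simp) s.2 t.2, mul_zero, zero_mul]
      have hC : ∀ s : ↥It, (∑ t : ↥If, x s.1 * φ l s.1 t.1 * y t.1) = 0 := by
        intro s
        refine Finset.sum_eq_zero fun t _ => ?_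
        rw [phi_Iset_zero D hA hφ (by simp) s.2 t.2, mul_zero, zero_mul]
      rw [Finset.sum_add_distrib, Finset.sum_add_distrib]
      rw [Finset.sum_congr rfl fun s _ => hB s, Finset.sum_congr rfl fun s _ => hC s]
      simp only [Finset.sum_const_zero, add_zero, zero_add]
      rfl
    have hform_zero_f : ∀ (x : ↥If → R),
        formSum (fun s t : ↥If => φ l s.1 t.1) x 0 = 0 := by
      intro x
      unfold formSum
      simp
    have hform_zero_t : ∀ (x : ↥It → R),
        formSum (fun s t : ↥It => φ l s.1 t.1) x 0 = 0 := by
      intro x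
      unfold formSum
      simp
    have hmemW : ∀ x : T l → R, x ∈ radW l ↔
        ((toF x).1 ∈ radZ l false ∧ (toF x).2 ∈ radZ l true) := by
      intro x
      rw [hradW, hradZ, hradZ]
      constructor
      · intro h
        constructor
        · intro y'
          have h2 := hform_split x (invF (y', 0))
          have e1 : (toF (invF (y', 0))).1 = y' := congrArg Prod.fst (hright (y', 0))
          have e2 : (toF (invF (y', 0))).2 = 0 := congrArg Prod.snd (hright (y', 0))
          rw [e1, e2, h (invF (y', 0)), hform_zero_t, add_zero] at h2
          exact h2.symm
        · intro y'
          have h2 := hform_split x (invF (0, y'))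
          have e1 : (toF (invF (0, y'))).1 = 0 := congrArg Prod.fst (hright (0, y'))
          have e2 : (toF (invF (0, y'))).2 = y' := congrArg Prod.snd (hright (0, y'))
          rw [e1, e2, h (invF (0, y')), hform_zero_f, zero_add] at h2
          exact h2.symm
      · intro ⟨h1, h2⟩ y
        rw [hform_split x y, h1 _, h2 _, add_zero]
    have hdiff : ∀ x y : T l → R, x - y ∈ radW l →
        ((toF x).1 - (toF y).1 ∈ radZ l false ∧
          (toF x).2 - (toF y).2 ∈ radZ l true) := by
      intro x y h
      exact (hmemW (x - y)).1 h
    -- the maps between the quotients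
    let toQ : ((T l → R) ⧸ radW l) →
        (((↥If → R) ⧸ radZ l false) × ((↥It → R) ⧸ radZ l true)) :=
      fun q => Quotient.liftOn' q
        (fun x => (Submodule.Quotient.mk (toF x).1, Submodule.Quotient.mk (toF x).2))
        (by
          intro x y hxy
          have hxy' : x - y ∈ radW l :=
            (Submodule.Quotient.eq _).1 (Quotient.sound' hxy)
          obtain ⟨hf, ht⟩ := hdiff x y hxy'
          exact Prod.ext ((Submodule.Quotient.eq _).2 hf)
            ((Submodule.Quotient.eq _).2 ht))
    let invQ : (((↥If → R) ⧸ radZ l false) × ((↥It → R) ⧸ radZ l true)) →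
        ((T l → R) ⧸ radW l) :=
      fun y => Quotient.liftOn₂' y.1 y.2
        (fun u v => Submodule.Quotient.mk (invF (u, v)))
        (by
          intro u v u' v' hu hv
          have hu' : u - u' ∈ radZ l false :=
            (Submodule.Quotient.eq _).1 (Quotient.sound' hu)
          have hv' : v - v' ∈ radZ l true :=
            (Submodule.Quotient.eq _).1 (Quotient.sound' hv)
          refine (Submodule.Quotient.eq _).2 ?_
          have hd : invF (u - u', v - v') = invF (u, v) - invF (u', v') :=
            map_sub F.symm (u, v) (u', v')
          rw [← hd]
          refine (hmemW _).2 ⟨?_, ?_⟩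
          · rw [show (toF (invF (u - u', v - v'))).1 = u - u' from
              congrArg Prod.fst (hright _)]
            exact hu'
          · rw [show (toF (invF (u - u', v - v'))).2 = v - v' from
              congrArg Prod.snd (hright _)]
            exact hv')
    have hmk'' : ∀ x : T l → R,
        (Quotient.mk'' x : (T l → R) ⧸ radW l) = Submodule.Quotient.mk x :=
      fun _ => rfl
    have hmkZf : ∀ u : ↥If → R,
        (Quotient.mk'' u : (↥If → R) ⧸ radZ l false) = Submodule.Quotient.mk u :=
      fun _ => rfl
    have hmkZt : ∀ v : ↥It → R,
        (Quotient.mk'' v : (↥It → R) ⧸ radZ l true) = Submodule.Quotient.mk v :=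
      fun _ => rfl
    have htoQ_mk : ∀ x : T l → R, toQ (Submodule.Quotient.mk x) =
        (Submodule.Quotient.mk (toF x).1, Submodule.Quotient.mk (toF x).2) :=
      fun _ => rfl
    have hinvQ_mk : ∀ (u : ↥If → R) (v : ↥It → R),
        invQ (Submodule.Quotient.mk u, Submodule.Quotient.mk v) =
          Submodule.Quotient.mk (invF (u, v)) :=
      fun _ _ => rfl
    have hmk_smul : ∀ (a : (↥Asub)ᵐᵒᵖ) (x : T l → R),
        a • (Submodule.Quotient.mk x : (T l → R) ⧸ radW l) =
          Submodule.Quotient.mk (a • x) :=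
      fun a x => (Submodule.Quotient.mk_smul (radW l) (op (a.unop.1 : A)) x).symm
    refine ⟨{ toFun := toQ
              invFun := invQ
              map_add' := ?_
              map_smul' := ?_
              left_inv := ?_
              right_inv := ?_ }⟩
    · intro q₁ q₂
      refine Quotient.inductionOn₂' q₁ q₂ fun x y => ?_
      rfl
    · intro a q
      refine Quotient.inductionOn' q fun x => ?_
      exact Prod.ext
        (congrArg (Submodule.Quotient.mk (p := radZ l false))
          (congrArg Prod.fst (hF_smul a x)))
        (congrArg (Submodule.Quotient.mk (p := radZ l true))
          (congrArg Prod.snd (hF_smul a x)))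
    · intro q
      refine Quotient.inductionOn' q fun x => ?_
      exact congrArg
        (fun z : T l → R => (Submodule.Quotient.mk z : (T l → R) ⧸ radW l)) (hleft x)
    · intro y
      obtain ⟨q1, q2⟩ := y
      refine Quotient.inductionOn₂' q1 q2 fun u v => ?_
      exact Prod.ext
        (congrArg (Submodule.Quotient.mk (p := radZ l false))
          (congrArg Prod.fst (hright (u, v))))
        (congrArg (Submodule.Quotient.mk (p := radZ l true))
          (congrArg Prod.snd (hright (u, v))))
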